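/- Let S be a trace class operator and T a bounded operator on H. Then the operator-operator convolution S*T, i.e. the function x ↦ tr(S α_x(T)), is continuous on G. -/

import Mathlib

open MeasureTheory Filter Topology ComplexConjugate
open scoped Pointwise ENNReal InnerProductSpace

noncomputable section

variable {H : Type*} [NormedAddCommGroup H] [InnerProductSpace ℂ H] [CompleteSpace H]

/-- The trace of a (trace class) operator, computed as `∑ ⟨T e_i, e_i⟩` along a fixed
Hilbert basis of `H`. -/
noncomputable def opTrace (T : H →L[ℂ] H) : ℂ :=
  ∑' i : (exists_hilbertBasis ℂ H).choose,
    ⟪((exists_hilbertBasis ℂ H).choose_spec.choose i : H),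
      T ((exists_hilbertBasis ℂ H).choose_spec.choose i)⟫_ℂ

/-- An operator is trace class if it admits a Schmidt decomposition
`T = ∑ᵢ sᵢ (ψᵢ ⊗ φᵢ)` with orthonormal families `ψ, φ` and a summable sequence `s ≥ 0`
of singular values. Here `(ψ ⊗ φ)(ξ) = ⟨ξ, φ⟩ψ`. -/
def IsTraceClass (T : H →L[ℂ] H) : Prop :=
  ∃ (I : Type) (_ : Countable I) (s : I → ℝ) (ψ φ : I → H),
    Orthonormal ℂ ψ ∧ Orthonormal ℂ φ ∧ (∀ i, 0 ≤ s i) ∧ Summable s ∧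
    ∀ ξ : H, HasSum (fun i => s i • (⟪φ i, ξ⟫_ℂ • ψ i)) (T ξ)

set_option linter.unusedSectionVars false


lemma parseval_sq {w : Type*} (b : HilbertBasis w ℂ H) (x : H) :
    HasSum (fun j => ‖⟪b j, x⟫_ℂ‖ ^ 2) (‖x‖ ^ 2) := by
  have h := (b.hasSum_inner_mul_inner x x).mapL Complex.reCLM
  have h1 : (fun j => Complex.reCLM (⟪x, b j⟫_ℂ * ⟪b j, x⟫_ℂ)) =
      fun j => ‖⟪b j, x⟫_ℂ‖ ^ 2 := by
    funext j
    rw [← inner_conj_symm (b j) x]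
    set z := ⟪b j, x⟫_ℂ
    simp only [Complex.reCLM_apply, Complex.mul_re, Complex.conj_re, Complex.conj_im,
      Complex.sq_norm, Complex.normSq_apply]
    ring
  have h2 : Complex.reCLM ⟪x, x⟫_ℂ = ‖x‖ ^ 2 := by
    simpa using inner_self_eq_norm_sq (𝕜 := ℂ) x
  rwa [h1, h2] at h

lemma coeff_mul_summable {w : Type*} (b : HilbertBasis w ℂ H) (x y : H) :
    Summable (fun j => ‖⟪b j, x⟫_ℂ‖ * ‖⟪b j, y⟫_ℂ‖) := by
  refine Summable.of_nonneg_of_le (fun j => by positivity)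
    (fun j => ?_) (((parseval_sq b x).summable.add (parseval_sq b y).summable).div_const 2)
  nlinarith [norm_nonneg (⟪b j, x⟫_ℂ), norm_nonneg (⟪b j, y⟫_ℂ),
    two_mul_le_add_sq ‖⟪b j, x⟫_ℂ‖ ‖⟪b j, y⟫_ℂ‖]

lemma coeff_mul_tsum_le {w : Type*} (b : HilbertBasis w ℂ H) (x y : H) :
    ∑' j, ‖⟪b j, x⟫_ℂ‖ * ‖⟪b j, y⟫_ℂ‖ ≤ (‖x‖ ^ 2 + ‖y‖ ^ 2) / 2 := by
  have hsum := ((parseval_sq b x).summable.add (parseval_sq b y).summable).div_const 2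
  calc ∑' j, ‖⟪b j, x⟫_ℂ‖ * ‖⟪b j, y⟫_ℂ‖
      ≤ ∑' j, (‖⟪b j, x⟫_ℂ‖ ^ 2 + ‖⟪b j, y⟫_ℂ‖ ^ 2) / 2 := by
        refine Summable.tsum_le_tsum (fun j => ?_) (coeff_mul_summable b x y) hsum
        nlinarith [norm_nonneg (⟪b j, x⟫_ℂ), norm_nonneg (⟪b j, y⟫_ℂ),
          two_mul_le_add_sq ‖⟪b j, x⟫_ℂ‖ ‖⟪b j, y⟫_ℂ‖]
    _ = (‖x‖ ^ 2 + ‖y‖ ^ 2) / 2 := by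
        rw [tsum_div_const, ((parseval_sq b x).add (parseval_sq b y)).tsum_eq]

lemma opTrace_mul_eq {I : Type} [Countable I] (s : I → ℝ) (ψ φ : I → H)
    (hψ : Orthonormal ℂ ψ) (hφ : Orthonormal ℂ φ) (hs0 : ∀ i, 0 ≤ s i) (hssum : Summable s)
    (S : H →L[ℂ] H)
    (hSdec : ∀ ξ : H, HasSum (fun i => s i • (⟪φ i, ξ⟫_ℂ • ψ i)) (S ξ))
    (A : H →L[ℂ] H) :
    opTrace (S * A) = ∑' i, (s i : ℂ) * ⟪φ i, A (ψ i)⟫_ℂ := by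
  set w := (exists_hilbertBasis ℂ H).choose
  set b : HilbertBasis w ℂ H := (exists_hilbertBasis ℂ H).choose_spec.choose with hb
  set f : I → w → ℂ := fun i j => (s i : ℂ) * (⟪φ i, A (b j)⟫_ℂ * ⟪b j, ψ i⟫_ℂ) with hf
  have step1 : ∀ j, HasSum (fun i => f i j) ⟪b j, (S * A) (b j)⟫_ℂ := by
    intro j
    have h := (hSdec (A (b j))).mapL (innerSL ℂ (b j))
    have he : (fun i => (innerSL ℂ (b j)) (s i • ⟪φ i, A (b j)⟫_ℂ • ψ i)) = fun i => f i j := by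
      funext i
      simp only [innerSL_apply_apply, inner_smul_right, RCLike.real_smul_eq_coe_smul (K := ℂ), hf]
      norm_cast
    rwa [he] at h
  have step2 : ∀ i, HasSum (fun j => f i j) ((s i : ℂ) * ⟪φ i, A (ψ i)⟫_ℂ) := by
    intro i
    have h := (b.hasSum_inner_mul_inner
      (ContinuousLinearMap.adjoint A (φ i)) (ψ i)).mul_left ((s i : ℂ))
    simpa only [ContinuousLinearMap.adjoint_inner_left] using h
  have hnorm : ∀ i j, ‖f i j‖ =
      s i * (‖⟪b j, ContinuousLinearMap.adjoint A (φ i)⟫_ℂ‖ * ‖⟪b j, ψ i⟫_ℂ‖) := by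
    intro i j
    rw [hf]
    simp only [norm_mul, Complex.norm_real, Real.norm_eq_abs, abs_of_nonneg (hs0 i)]
    rw [← ContinuousLinearMap.adjoint_inner_left A (b j) (φ i),
      norm_inner_symm (ContinuousLinearMap.adjoint A (φ i)) (b j)]
  have hAadj : ∀ i, ‖ContinuousLinearMap.adjoint A (φ i)‖ ≤ ‖A‖ := by
    intro i
    calc ‖ContinuousLinearMap.adjoint A (φ i)‖
        ≤ ‖ContinuousLinearMap.adjoint A‖ * ‖φ i‖ := (ContinuousLinearMap.adjoint A).le_opNorm _
      _ = ‖A‖ := by rw [hφ.1 i, mul_one, LinearIsometryEquiv.norm_map]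
  have hsummable : Summable (Function.uncurry f) := by
    apply Summable.of_norm
    rw [summable_prod_of_nonneg (fun p => norm_nonneg _)]
    constructor
    · intro i
      simp only [Function.uncurry]
      simp_rw [hnorm i]
      exact ((coeff_mul_summable b _ (ψ i)).mul_left (s i))
    · refine Summable.of_nonneg_of_le (fun i => tsum_nonneg fun j => norm_nonneg _)
        (fun i => ?_) (hssum.mul_right ((‖A‖ ^ 2 + 1) / 2))
      simp only [Function.uncurry]
      simp_rw [hnorm i]
      rw [tsum_mul_left]
      refine mul_le_mul_of_nonneg_left ?_ (hs0 i)
      calc ∑' j, ‖⟪b j, ContinuousLinearMap.adjoint A (φ i)⟫_ℂ‖ * ‖⟪b j, ψ i⟫_ℂ‖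
          ≤ (‖ContinuousLinearMap.adjoint A (φ i)‖ ^ 2 + ‖ψ i‖ ^ 2) / 2 :=
            coeff_mul_tsum_le b _ _
        _ ≤ (‖A‖ ^ 2 + 1) / 2 := by
            have h1 := hAadj i
            have h2 := hψ.1 i
            have h3 : (0:ℝ) ≤ ‖ContinuousLinearMap.adjoint A (φ i)‖ := norm_nonneg _
            rw [h2]
            nlinarith
  have e1 : opTrace (S * A) = ∑' j, ∑' i, f i j :=
    tsum_congr fun j => (step1 j).tsum_eq.symm
  rw [e1, Summable.tsum_comm hsummable]
  exact tsum_congr fun i => (step2 i).tsum_eq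

variable {G : Type*} [Group G] [TopologicalSpace G] [IsTopologicalGroup G]
  [LocallyCompactSpace G] [SigmaCompactSpace G] [T2Space G]

/-- The conjugation action `α_x(T) = π(x)* T π(x)`. -/
def opConj (π : G →* (H →L[ℂ] H)) (x : G) (T : H →L[ℂ] H) : H →L[ℂ] H :=
  star (π x) * T * π x

/-- The operator-operator convolution `(S*T)(x) = tr(S α_x(T))`. -/
noncomputable def opConv (π : G →* (H →L[ℂ] H)) (S T : H →L[ℂ] H) (x : G) : ℂ :=
  opTrace (S * opConj π x T)

/-- For `S` trace class and `T` bounded, the operator-operator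
convolution `x ↦ tr(S α_x(T))` is continuous on `G`. -/
theorem opConv_continuous (π : G →* (H →L[ℂ] H))
    (hπ_unitary : ∀ x : G, π x ∈ unitary (H →L[ℂ] H))
    (hπ_cont : ∀ ψ : H, Continuous fun x : G => π x ψ)
    (S : H →L[ℂ] H) (hS : IsTraceClass S) (T : H →L[ℂ] H) :
    Continuous (opConv π S T) := by
  obtain ⟨I, hI, s, ψ, φ, hψ, hφ, hs0, hssum, hdec⟩ := hS
  haveI := hI
  have key : ∀ x, opConv π S T x = ∑' i, (s i : ℂ) * ⟪π x (φ i), T (π x (ψ i))⟫_ℂ := by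
    intro x
    rw [opConv, opTrace_mul_eq s ψ φ hψ hφ hs0 hssum S hdec (opConj π x T)]
    refine tsum_congr fun i => ?_
    congr 1
    show ⟪φ i, (star (π x) * T * π x) (ψ i)⟫_ℂ = _
    rw [ContinuousLinearMap.mul_apply, ContinuousLinearMap.mul_apply,
      ContinuousLinearMap.star_eq_adjoint, ContinuousLinearMap.adjoint_inner_right]
  have hcont : Continuous fun x => ∑' i, (s i : ℂ) * ⟪π x (φ i), T (π x (ψ i))⟫_ℂ := by
    refine continuous_tsum (u := fun i => s i * ‖T‖) (fun i => ?_)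
      (hssum.mul_right _) (fun i x => ?_)
    · exact continuous_const.mul ((hπ_cont (φ i)).inner (T.continuous.comp (hπ_cont (ψ i))))
    · rw [norm_mul, Complex.norm_real, Real.norm_eq_abs, abs_of_nonneg (hs0 i)]
      refine mul_le_mul_of_nonneg_left ?_ (hs0 i)
      calc ‖⟪π x (φ i), T (π x (ψ i))⟫_ℂ‖
          ≤ ‖π x (φ i)‖ * ‖T (π x (ψ i))‖ := norm_inner_le_norm _ _
        _ ≤ 1 * (‖T‖ * 1) := by
            have h1 : ‖π x (φ i)‖ = 1 := by
              rw [ContinuousLinearMap.norm_map_of_mem_unitary (hπ_unitary x), hφ.1 i]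
            have h2 : ‖T (π x (ψ i))‖ ≤ ‖T‖ * 1 := by
              have h3 := T.le_opNorm (π x (ψ i))
              rwa [ContinuousLinearMap.norm_map_of_mem_unitary (hπ_unitary x), hψ.1 i] at h3
            rw [h1]
            exact mul_le_mul_of_nonneg_left h2 zero_le_one
        _ = ‖T‖ := by ring
  rw [show opConv π S T = fun x => ∑' i, (s i : ℂ) * ⟪π x (φ i), T (π x (ψ i))⟫_ℂ
    from funext key]
  exact hcont
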